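/- Let M_k([i,j)) denote the set of segmentations of the interval [i,j) into k contiguous segments, identified with strictly increasing sequences i = t_1 < ... < t_{k+1} = j. For any function g assigning a real value to each segment [a,b), and for any 1 ≤ t ≤ n+1, 1 ≤ k ≤ K, the set M_K([1,n+1)) of segmentations whose k-th segment starts at t is in bijection with the product M_{k-1}([1,t)) × M_{K-k+1}([t,n+1)), and consequently ∑_{m : τ_k(m)=t} ∏_{r ∈ m} g(r) = (∑_{m' ∈ M_{k-1}([1,t))} ∏_{r ∈ m'} g(r)) · (∑_{m'' ∈ M_{K-k+1}([t,n+1))} ∏_{r ∈ m''} g(r)). -/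

import Mathlib

set_option maxHeartbeats 1000000


/-- Segmentations of `[a, b)` into `k` contiguous segments, as strictly increasing
sequences `a = t 0 < ... < t k = b` with values in `{0, ..., n+1}`. -/
def Seg (n k a b : ℕ) : Finset (Fin (k + 1) → Fin (n + 2)) :=
  Finset.univ.filter fun t =>
    (∀ l : Fin k, t l.castSucc < t l.succ) ∧ (t 0 : ℕ) = a ∧ (t (Fin.last k) : ℕ) = b

/-- Multiplicative weight of a segmentation: product of `g` over its segments. -/
def W (n k : ℕ) (g : ℕ → ℕ → ℝ) (t : Fin (k + 1) → Fin (n + 2)) : ℝ :=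
  ∏ l : Fin k, g (t l.castSucc) (t l.succ)

lemma mem_Seg {n k a b : ℕ} {t : Fin (k+1) → Fin (n+2)} :
    t ∈ Seg n k a b ↔ (∀ l : Fin k, t l.castSucc < t l.succ) ∧ (t 0 : ℕ) = a ∧ (t (Fin.last k) : ℕ) = b := by
  simp [Seg]

/-- glue two segmentations sharing an endpoint -/
def glue {n j J : ℕ} (p1 : Fin (j+1) → Fin (n+2)) (p2 : Fin (J+1) → Fin (n+2)) :
    Fin (j+J+1) → Fin (n+2) :=
  fun l => if h : (l : ℕ) ≤ j then p1 ⟨l, by omega⟩ else p2 ⟨(l:ℕ)-j, by omega⟩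

lemma glue_le {n j J : ℕ} (p1 : Fin (j+1) → Fin (n+2)) (p2 : Fin (J+1) → Fin (n+2))
    (l : Fin (j+J+1)) (h : (l : ℕ) ≤ j) : glue p1 p2 l = p1 ⟨l, by omega⟩ := dif_pos h

lemma glue_gt {n j J : ℕ} (p1 : Fin (j+1) → Fin (n+2)) (p2 : Fin (J+1) → Fin (n+2))
    (l : Fin (j+J+1)) (h : ¬ ((l : ℕ) ≤ j)) : glue p1 p2 l = p2 ⟨(l:ℕ)-j, by omega⟩ := dif_neg h

/-- congruence for applications at `Fin.mk` indices -/
lemma vmc {α : Type*} {q : ℕ} (f : Fin q → α) {v w : ℕ} {hv : v < q} {hw : w < q}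
    (h : v = w) : f ⟨v, hv⟩ = f ⟨w, hw⟩ := by subst h; rfl

lemma key (n j J a t₀ b : ℕ) (g : ℕ → ℕ → ℝ) :
    ∑ m ∈ (Seg n (j + J) a b).filter
        (fun m => (m (⟨j, by omega⟩ : Fin (j + J + 1)) : ℕ) = t₀), W n (j + J) g m
      = (∑ m ∈ Seg n j a t₀, W n j g m) * (∑ m ∈ Seg n J t₀ b, W n J g m) := by
  rw [Finset.sum_mul_sum, ← Finset.sum_product']
  apply Finset.sum_nbij'
    (i := fun m => (fun l : Fin (j+1) => m ⟨l, by omega⟩, fun l : Fin (J+1) => m ⟨j + l, by omega⟩))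
    (j := fun p => glue p.1 p.2)
  · -- hi : forward membership
    intro m hm
    simp only [Finset.mem_filter, mem_Seg] at hm
    obtain ⟨⟨hmono, h0, hlast⟩, ht⟩ := hm
    have key : ∀ (v : ℕ) (h : v < j + J) (h1 h2 : _), m ⟨v, h1⟩ < m ⟨v+1, h2⟩ := by
      intro v h h1 h2
      simpa [Fin.castSucc, Fin.succ, Fin.castAdd, Fin.castLE] using hmono ⟨v, h⟩
    rw [Finset.mem_product]
    constructor
    · rw [mem_Seg]
      refine ⟨fun l => ?_, ?_, ?_⟩
      · exact key l (by omega) (by omega) (by omega)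
      · convert h0 using 3 <;> simp [Fin.ext_iff]
      · convert ht using 3 <;> simp [Fin.ext_iff]
    · rw [mem_Seg]
      refine ⟨fun l => ?_, ?_, ?_⟩
      · have := key (j + l) (by omega) (by omega) (by omega)
        convert this using 3 <;> simp [Fin.ext_iff] <;> omega
      · convert ht using 3 <;> simp [Fin.ext_iff]
      · convert hlast using 3 <;> simp [Fin.ext_iff]
  · -- hj : backward membership
    intro p hp
    rw [Finset.mem_product, mem_Seg, mem_Seg] at hp
    obtain ⟨⟨h1mono, h10, h1last⟩, h2mono, h20, h2last⟩ := hp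
    have k1 : ∀ (v : ℕ) (h : v < j) (h1 h2 : _), p.1 ⟨v, h1⟩ < p.1 ⟨v+1, h2⟩ := by
      intro v h h1 h2
      simpa [Fin.castSucc, Fin.succ, Fin.castAdd, Fin.castLE] using h1mono ⟨v, h⟩
    have k2 : ∀ (v : ℕ) (h : v < J) (h1 h2 : _), p.2 ⟨v, h1⟩ < p.2 ⟨v+1, h2⟩ := by
      intro v h h1 h2
      simpa [Fin.castSucc, Fin.succ, Fin.castAdd, Fin.castLE] using h2mono ⟨v, h⟩
    have e1 : ∀ h : j < j+1, (p.1 ⟨j, h⟩ : ℕ) = t₀ := by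
      intro h
      rw [show (⟨j, h⟩ : Fin (j+1)) = Fin.last j from rfl]; exact h1last
    have e2 : ∀ h : 0 < J+1, (p.2 ⟨0, h⟩ : ℕ) = t₀ := by
      intro h
      rw [show (⟨0, h⟩ : Fin (J+1)) = 0 from Fin.ext (by simp)]; exact h20
    simp only [Finset.mem_filter, mem_Seg]
    refine ⟨⟨fun l => ?_, ?_, ?_⟩, ?_⟩
    · -- monotonicity of glued
      rcases lt_trichotomy ((l : ℕ) + 1) (j + 1) with h | h | h
      · rw [glue_le _ _ _ (show ((l.castSucc : Fin (j+J+1)) : ℕ) ≤ j by simp; omega),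
            glue_le _ _ _ (show ((l.succ : Fin (j+J+1)) : ℕ) ≤ j by simp; omega)]
        calc p.1 ⟨(l.castSucc : ℕ), by simp; omega⟩
            = p.1 ⟨(l : ℕ), by omega⟩ := vmc _ (by simp)
          _ < p.1 ⟨(l : ℕ) + 1, by omega⟩ := k1 _ (by omega) _ _
          _ = p.1 ⟨(l.succ : ℕ), by simp; omega⟩ := vmc _ (by simp)
      · have hl : (l : ℕ) = j := by omega
        have hJ : 0 < J := by have := l.isLt; omega
        rw [glue_le _ _ _ (show ((l.castSucc : Fin (j+J+1)) : ℕ) ≤ j by simp; omega),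
            glue_gt _ _ _ (show ¬ ((l.succ : Fin (j+J+1)) : ℕ) ≤ j by simp; omega)]
        calc p.1 ⟨(l.castSucc : ℕ), by simp; omega⟩
            = p.2 ⟨0, by omega⟩ := by
              refine Fin.ext ?_
              rw [show (⟨(l.castSucc : ℕ), by simp; omega⟩ : Fin (j+1)) = ⟨j, by omega⟩
                    from Fin.ext (by simp [hl])]
              rw [e1, e2]
          _ < p.2 ⟨1, by omega⟩ := k2 0 hJ (by omega) (by omega)
          _ = p.2 ⟨(l.succ : ℕ) - j, by omega⟩ := vmc _ (by simp; omega)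
      · rw [glue_gt _ _ _ (show ¬ ((l.castSucc : Fin (j+J+1)) : ℕ) ≤ j by simp; omega),
            glue_gt _ _ _ (show ¬ ((l.succ : Fin (j+J+1)) : ℕ) ≤ j by simp; omega)]
        calc p.2 ⟨(l.castSucc : ℕ) - j, by omega⟩
            = p.2 ⟨(l : ℕ) - j, by have := l.isLt; omega⟩ := vmc _ (by simp)
          _ < p.2 ⟨(l : ℕ) - j + 1, by have := l.isLt; omega⟩ :=
              k2 _ (by have := l.isLt; omega) _ _
          _ = p.2 ⟨(l.succ : ℕ) - j, by omega⟩ := vmc _ (by simp; omega)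
    · -- start
      rw [glue_le _ _ _ (by simp)]
      rw [show (⟨((0 : Fin (j+J+1)) : ℕ), by simp⟩ : Fin (j+1)) = 0 from Fin.ext (by simp)]
      exact h10
    · -- end
      rcases Nat.eq_zero_or_pos J with hJ | hJ
      · rw [glue_le _ _ _ (by simp [Fin.last]; omega)]
        rw [show (⟨((Fin.last (j+J) : Fin (j+J+1)) : ℕ), by omega⟩ : Fin (j+1)) = Fin.last j
              from Fin.ext (by simp [Fin.last]; omega)]
        rw [h1last, ← h20]
        rw [show (0 : Fin (J+1)) = Fin.last J from Fin.ext (by simp [Fin.last]; omega)]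
        exact h2last
      · rw [glue_gt _ _ _ (by simp [Fin.last]; omega)]
        rw [show (⟨((Fin.last (j+J) : Fin (j+J+1)) : ℕ) - j, by omega⟩ : Fin (J+1)) = Fin.last J
              from Fin.ext (by simp [Fin.last])]
        exact h2last
    · -- changepoint
      rw [glue_le _ _ _ (by simp)]
      exact e1 _
  · -- left inverse
    intro m hm
    funext l
    by_cases h : (l : ℕ) ≤ j
    · rw [glue_le _ _ _ h]
    · rw [glue_gt _ _ _ h]
      exact congrArg m (Fin.ext (by simp; omega))
  · -- right inverse
    intro p hp
    rw [Finset.mem_product, mem_Seg, mem_Seg] at hp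
    obtain ⟨⟨h1mono, h10, h1last⟩, h2mono, h20, h2last⟩ := hp
    refine Prod.ext ?_ ?_
    · funext l
      show glue p.1 p.2 ⟨(l : ℕ), by omega⟩ = p.1 l
      rw [glue_le _ _ _ (by simp; omega)]
    · funext l
      show glue p.1 p.2 ⟨j + (l : ℕ), by omega⟩ = p.2 l
      by_cases h : (l : ℕ) = 0
      · rw [glue_le _ _ _ (by simp [h])]
        refine Fin.ext ?_
        rw [show (⟨((⟨j + (l:ℕ), by omega⟩ : Fin (j+J+1)) : ℕ), by simp [h]⟩ : Fin (j+1))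
              = Fin.last j from Fin.ext (by simp [Fin.last, h])]
        rw [show l = 0 from Fin.ext (by simp [h])]
        rw [h1last, h20]
      · rw [glue_gt _ _ _ (by show ¬ j + (l : ℕ) ≤ j; omega)]
        exact congrArg p.2 (Fin.ext (by simp))
  · -- weights
    intro m hm
    simp only []
    rw [W, Fin.prod_univ_add (f := fun l : Fin (j+J) => g (m l.castSucc) (m l.succ))]
    congr 1

/-- The segmentations of [1,n+1) into K segments whose k-th segment
starts at t₀ are in bijection with M_{k-1}([1,t₀)) × M_{K-k+1}([t₀,n+1)), and
the weighted sum factorizes accordingly. -/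
theorem segmentations_fixed_changepoint (n K k t₀ : ℕ) (hk1 : 1 ≤ k) (hk2 : k ≤ K)
    (g : ℕ → ℕ → ℝ) :
    Nonempty
      (((Seg n K 1 (n + 1)).filter
          (fun m => (m (⟨k - 1, by omega⟩ : Fin (K + 1)) : ℕ) = t₀))
        ≃ ((Seg n (k - 1) 1 t₀) ×ˢ (Seg n (K - k + 1) t₀ (n + 1)))) ∧
    ∑ m ∈ (Seg n K 1 (n + 1)).filter
        (fun m => (m (⟨k - 1, by omega⟩ : Fin (K + 1)) : ℕ) = t₀), W n K g m
      = (∑ m ∈ Seg n (k - 1) 1 t₀, W n (k - 1) g m)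
          * (∑ m ∈ Seg n (K - k + 1) t₀ (n + 1), W n (K - k + 1) g m) := by
  obtain ⟨J, rfl⟩ : ∃ J, K = (k - 1) + J := ⟨K - (k - 1), by omega⟩
  have hJ' : (k - 1) + J - k + 1 = J := by omega
  rw [hJ']
  have hsum : ∀ g' : ℕ → ℕ → ℝ,
      ∑ m ∈ ((Seg n ((k-1)+J) 1 (n + 1)).filter
        (fun m => (m (⟨k - 1, by omega⟩ : Fin ((k-1)+J + 1)) : ℕ) = t₀)), W n ((k-1)+J) g' m
      = (∑ m ∈ Seg n (k - 1) 1 t₀, W n (k - 1) g' m)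
          * (∑ m ∈ Seg n J t₀ (n + 1), W n J g' m) :=
    fun g' => key n (k-1) J 1 t₀ (n+1) g'
  refine ⟨?_, hsum g⟩
  have hc := hsum (fun _ _ => 1)
  simp only [W, Finset.prod_const_one, Finset.sum_const, nsmul_eq_mul, mul_one] at hc
  refine ⟨Finset.equivOfCardEq ?_⟩
  rw [Finset.card_product]
  exact_mod_cast hc
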